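/- Let L be an affine subspace of the space of real symmetric n×n matrices such that S = L ∩ {positive semidefinite matrices} is nonempty. If the codimension of L is strictly less than (r+1)(r+2)/2 for some r ∈ ℕ₀, then there exists a matrix A ∈ S with rank(A) ≤ r. -/

import Mathlib

open Matrix Module

def symSub (ι : Type*) [Fintype ι] [DecidableEq ι] : Submodule ℝ (Matrix ι ι ℝ) where
  carrier := {A | Aᵀ = A}
  add_mem' := fun {a b} ha hb => by simp only [Set.mem_setOf_eq, Matrix.transpose_add] at *; rw [ha, hb]
  zero_mem' := by simp
  smul_mem' := fun c A h => by simp only [Set.mem_setOf_eq, Matrix.transpose_smul] at *; rw [h]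

noncomputable def symLin (ι : Type*) [Fintype ι] [DecidableEq ι] :
    (Sym2 ι → ℝ) →ₗ[ℝ] Matrix ι ι ℝ where
  toFun g := Matrix.of fun i j => g s(i, j)
  map_add' := by intros; ext; simp
  map_smul' := by intros; ext; simp

lemma symLin_apply {ι : Type*} [Fintype ι] [DecidableEq ι] (g : Sym2 ι → ℝ) (i j : ι) :
    symLin ι g i j = g s(i, j) := rfl

lemma finrank_symSub (ι : Type*) [Fintype ι] [DecidableEq ι] :
    finrank ℝ (symSub ι) = Fintype.card ι * (Fintype.card ι + 1) / 2 := by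
  have hmem : ∀ g : Sym2 ι → ℝ, symLin ι g ∈ symSub ι := by
    intro g
    show (symLin ι g)ᵀ = _
    ext i j
    simp only [Matrix.transpose_apply, symLin_apply, Sym2.eq_swap]
  have hinj : Function.Injective (symLin ι) := by
    intro g h hgh
    funext z
    induction z using Sym2.ind with
    | _ i j =>
      have := congrFun (congrFun hgh i) j
      simpa only [symLin_apply] using this
  have hsurj : ∀ A ∈ symSub ι, ∃ g, symLin ι g = A := by
    intro A hA
    refine ⟨Sym2.lift ⟨fun i j => A i j, fun a b => ?_⟩, ?_⟩
    · have := congrFun (congrFun hA a) b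
      simpa [Matrix.transpose_apply] using this.symm
    · ext i j
      simp [symLin_apply]
  let e : (Sym2 ι → ℝ) ≃ₗ[ℝ] symSub ι :=
    LinearEquiv.ofBijective ((symLin ι).codRestrict (symSub ι) hmem)
      ⟨fun g h hgh => hinj (congrArg Subtype.val hgh),
       fun ⟨A, hA⟩ => by obtain ⟨g, hg⟩ := hsurj A hA; exact ⟨g, Subtype.ext hg⟩⟩
  have : finrank ℝ (symSub ι) = Fintype.card (Sym2 ι) := by
    rw [← e.finrank_eq, finrank_fintype_fun_eq_card]
  rw [this, Sym2.card, Nat.choose_two_right, Nat.add_sub_cancel, Nat.mul_comm]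

lemma reduce {n : ℕ} {A B : Matrix (Fin n) (Fin n) ℝ} (hA : A.PosSemidef)
    (hBsym : Bᵀ = B) (hB0 : B ≠ 0) (hker : ∀ v, A *ᵥ v = 0 → B *ᵥ v = 0) :
    ∃ t : ℝ, (A + t • B).PosSemidef ∧ (A + t • B).rank < A.rank := by
  have hAH : A.IsHermitian := hA.isHermitian
  set d : Fin n → ℝ := hAH.eigenvalues with hd_def
  have hd : ∀ i, 0 ≤ d i := fun i => hA.eigenvalues_nonneg i
  set U : Matrix (Fin n) (Fin n) ℝ := (hAH.eigenvectorUnitary : Matrix (Fin n) (Fin n) ℝ) with hU_def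
  have hU1 : U * star U = 1 := Matrix.mem_unitaryGroup_iff.mp hAH.eigenvectorUnitary.2
  have hU2 : star U * U = 1 := Matrix.mem_unitaryGroup_iff'.mp hAH.eigenvectorUnitary.2
  have hspec : A = U * diagonal d * star U := by
    simpa [RCLike.ofReal_real_eq_id] using hAH.spectral_theorem
  have hBH : B.IsHermitian := by
    rw [Matrix.IsHermitian, conjTranspose_eq_transpose_of_trivial]; exact hBsym
  set C : Matrix (Fin n) (Fin n) ℝ := star U * B * U with hC_def
  have hCH : C.IsHermitian := by
    rw [Matrix.IsHermitian] at hBH ⊢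
    rw [hC_def]
    simp only [conjTranspose_mul, conjTranspose_mul, star_eq_conjTranspose,
      conjTranspose_conjTranspose, hBH, Matrix.mul_assoc]
  have hB_eq : B = U * C * star U := by
    rw [hC_def]
    calc B = (U * star U) * B * (U * star U) := by rw [hU1]; simp [Matrix.mul_assoc]
    _ = U * (star U * B * U) * star U := by simp only [Matrix.mul_assoc]
  -- columns of C vanish where d vanishes
  have hCcol : ∀ j, d j = 0 → ∀ i, C i j = 0 := by
    intro j hj i
    have hAv : A *ᵥ (U *ᵥ Pi.single j 1) = 0 := by
      rw [hspec, mulVec_mulVec, Matrix.mul_assoc (U * diagonal d), hU2, Matrix.mul_one,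
        ← mulVec_mulVec, diagonal_mulVec_single, hj, zero_mul, Pi.single_zero, mulVec_zero]
    have hBv := hker _ hAv
    have : C *ᵥ Pi.single j 1 = 0 := by
      rw [hC_def, ← mulVec_mulVec, ← mulVec_mulVec, hBv, mulVec_zero]
    have hcol := congrFun this i
    simpa [mulVec_single] using hcol
  have hCrow : ∀ i, d i = 0 → ∀ j, C i j = 0 := by
    intro i hi j
    have h1 := congrFun (congrFun hCH i) j
    simp only [conjTranspose_apply, star_trivial] at h1
    rw [← h1]
    exact hCcol i hi j
  set e : Fin n → ℝ := fun i => if d i = 0 then 0 else (Real.sqrt (d i))⁻¹ with he_def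
  set f : Fin n → ℝ := fun i => Real.sqrt (d i) with hf_def
  have hsqrt_ne : ∀ i, d i ≠ 0 → Real.sqrt (d i) ≠ 0 := fun i hi =>
    Real.sqrt_ne_zero'.mpr (lt_of_le_of_ne (hd i) (Ne.symm hi))
  have hFF : diagonal f * diagonal f = diagonal d := by
    rw [diagonal_mul_diagonal]
    have : (fun i => f i * f i) = d := funext fun i => Real.mul_self_sqrt (hd i)
    rw [this]
  have hfe : ∀ i, f i * e i = if d i = 0 then 0 else 1 := by
    intro i
    by_cases hi : d i = 0
    · simp [he_def, hf_def, hi]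
    · simp only [he_def, hf_def, if_neg hi]
      exact mul_inv_cancel₀ (hsqrt_ne i hi)
  set M : Matrix (Fin n) (Fin n) ℝ := diagonal e * C * diagonal e with hM_def
  have hMH : M.IsHermitian := by
    rw [Matrix.IsHermitian, hM_def]
    simp only [conjTranspose_mul, (isHermitian_diagonal e).eq, hCH.eq, Matrix.mul_assoc]
  have hFMF : diagonal f * M * diagonal f = C := by
    rw [hM_def]
    have : diagonal f * (diagonal e * C * diagonal e) * diagonal f
        = (diagonal f * diagonal e) * C * (diagonal e * diagonal f) := by
      simp only [Matrix.mul_assoc]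
    rw [this, diagonal_mul_diagonal, diagonal_mul_diagonal, Matrix.mul_assoc]
    ext i j
    rw [diagonal_mul, mul_diagonal]
    by_cases hi : d i = 0
    · simp [hCrow i hi j]
    · by_cases hj : d j = 0
      · simp [hCcol j hj i]
      · have h1 : f i * e i = 1 := by rw [hfe]; simp [hi]
        have h2 : e j * f j = 1 := by rw [mul_comm, hfe]; simp [hj]
        rw [h1, h2]
        simp
  have hM0 : M ≠ 0 := by
    intro h
    apply hB0
    rw [hB_eq, ← hFMF, h]
    simp
  -- eigen data of M
  set μ : Fin n → ℝ := hMH.eigenvalues with hμ_def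
  set V : Matrix (Fin n) (Fin n) ℝ := (hMH.eigenvectorUnitary : Matrix (Fin n) (Fin n) ℝ) with hV_def
  have hV1 : V * star V = 1 := Matrix.mem_unitaryGroup_iff.mp hMH.eigenvectorUnitary.2
  have hMspec : M = V * diagonal μ * star V := by
    simpa [RCLike.ofReal_real_eq_id] using hMH.spectral_theorem
  have hex : ∃ j, μ j ≠ 0 := by
    by_contra h
    push_neg at h
    apply hM0
    have hd0 : diagonal μ = 0 := by
      have : μ = 0 := funext h
      rw [this]
      ext i j
      by_cases hij : i = j <;> simp [diagonal_apply, hij]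
    rw [hMspec, hd0]
    simp
  obtain ⟨j₀, hj₀⟩ := hex
  obtain ⟨i₀, _, hmax⟩ := Finset.exists_max_image Finset.univ (fun i => |μ i|) ⟨j₀, Finset.mem_univ _⟩
  set μ₀ : ℝ := μ i₀ with hμ₀_def
  have hμ₀ : μ₀ ≠ 0 := by
    intro h
    have h1 := hmax j₀ (Finset.mem_univ _)
    rw [h] at h1
    simp only [abs_zero] at h1
    exact hj₀ (abs_nonpos_iff.mp h1)
  set t : ℝ := -μ₀⁻¹ with ht_def
  -- N is PSD
  set N : Matrix (Fin n) (Fin n) ℝ := 1 + t • M with hN_def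
  have hNdiag : N = V * diagonal (fun j => 1 + t * μ j) * star V := by
    have hsm : t • (V * diagonal μ * star V) = V * (t • diagonal μ) * star V := by
      simp only [Matrix.mul_smul, Matrix.smul_mul]
    have hdiag : (1 : Matrix (Fin n) (Fin n) ℝ) + t • diagonal μ
        = diagonal (fun j => 1 + t * μ j) := by
      rw [← diagonal_smul, ← diagonal_one, diagonal_add]
      congr 1
    calc N = V * 1 * star V + t • (V * diagonal μ * star V) := by
          rw [Matrix.mul_one, hV1, hN_def, ← hMspec]
      _ = V * ((1 : Matrix (Fin n) (Fin n) ℝ) + t • diagonal μ) * star V := by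
          rw [hsm, ← Matrix.add_mul, ← Matrix.mul_add]
      _ = _ := by rw [hdiag]
  have hNpsd : N.PosSemidef := by
    rw [hNdiag, star_eq_conjTranspose V]
    refine Matrix.PosSemidef.mul_mul_conjTranspose_same ?_ V
    refine posSemidef_diagonal_iff.mpr fun j => ?_
    have habs : |μ j| ≤ |μ₀| := hmax j (Finset.mem_univ _)
    have h1 : μ₀⁻¹ * μ j ≤ 1 := by
      have : |μ₀⁻¹ * μ j| ≤ 1 := by
        rw [abs_mul, abs_inv]
        rw [inv_mul_le_one₀ (abs_pos.mpr hμ₀)]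
        exact habs
      linarith [le_abs_self (μ₀⁻¹ * μ j), this]
    rw [ht_def]
    nlinarith
  
  have hDC : diagonal f * N * diagonal f = diagonal d + t • C := by
    rw [hN_def, Matrix.mul_add, Matrix.add_mul, Matrix.mul_one, hFF]
    congr 1
    simp only [Matrix.mul_smul, Matrix.smul_mul]
    rw [hFMF]
  have hFH : (diagonal f)ᴴ = diagonal f := (isHermitian_diagonal f).eq
  have hDCpsd : (diagonal d + t • C).PosSemidef := by
    rw [← hDC]
    have h := hNpsd.mul_mul_conjTranspose_same (diagonal f)
    rwa [hFH] at h
  have hAB : A + t • B = U * (diagonal d + t • C) * star U := by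
    have h2 : t • B = U * (t • C) * star U := by
      rw [hB_eq]; simp only [Matrix.mul_smul, Matrix.smul_mul]
    rw [Matrix.mul_add, Matrix.add_mul, ← hspec, ← h2]
  have hABpsd : (A + t • B).PosSemidef := by
    rw [hAB, star_eq_conjTranspose U]
    exact hDCpsd.mul_mul_conjTranspose_same U
  refine ⟨t, hABpsd, ?_⟩
  have hkerle : LinearMap.ker A.mulVecLin ≤ LinearMap.ker (A + t • B).mulVecLin := by
    intro v hv
    rw [LinearMap.mem_ker, mulVecLin_apply] at hv ⊢
    rw [Matrix.add_mulVec, Matrix.smul_mulVec, hv, hker v hv]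
    simp
  set w' : Fin n → ℝ := ⇑(hMH.eigenvectorBasis i₀) with hw'_def
  have hMw : M *ᵥ w' = μ₀ • w' := hMH.mulVec_eigenvectorBasis i₀
  have hw'0 : w' ≠ 0 := by
    have h := hMH.eigenvectorBasis.orthonormal.ne_zero i₀
    intro hc; apply h; ext i; exact congrFun hc i
  have hw's : ∀ i, d i = 0 → w' i = 0 := by
    intro i hi
    have hrow : (M *ᵥ w') i = 0 := by
      have hM2 : M *ᵥ w' = diagonal e *ᵥ ((C * diagonal e) *ᵥ w') := by
        rw [mulVec_mulVec, ← Matrix.mul_assoc, ← hM_def]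
      rw [hM2, mulVec_diagonal]
      simp [he_def, hi]
    rw [hMw] at hrow
    simp only [Pi.smul_apply, smul_eq_mul] at hrow
    exact (mul_eq_zero.mp hrow).resolve_left hμ₀
  have hFEw : diagonal f *ᵥ (diagonal e *ᵥ w') = w' := by
    funext i
    rw [mulVec_diagonal, mulVec_diagonal]
    by_cases hi : d i = 0
    · simp [he_def, hi, hw's i hi]
    · rw [← mul_assoc, show f i * e i = 1 by rw [hfe]; simp [hi], one_mul]
  have hNw : N *ᵥ w' = 0 := by
    rw [hN_def, Matrix.add_mulVec, Matrix.one_mulVec, Matrix.smul_mulVec, hMw, ht_def,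
      smul_smul, neg_mul, inv_mul_cancel₀ hμ₀]
    simp
  set w : Fin n → ℝ := U *ᵥ (diagonal e *ᵥ w') with hw_def
  have hDCw : (diagonal d + t • C) *ᵥ (diagonal e *ᵥ w') = 0 := by
    rw [← hDC, ← mulVec_mulVec, ← mulVec_mulVec, hFEw, hNw, mulVec_zero]
  have hABw : (A + t • B) *ᵥ w = 0 := by
    rw [hAB, hw_def, ← mulVec_mulVec, ← mulVec_mulVec,
      mulVec_mulVec _ (star U) U, hU2, one_mulVec, hDCw, mulVec_zero]
  have hAw : A *ᵥ w ≠ 0 := by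
    have hADE : A *ᵥ w = U *ᵥ (diagonal d *ᵥ (diagonal e *ᵥ w')) := by
      rw [hspec, hw_def, ← mulVec_mulVec, ← mulVec_mulVec,
        mulVec_mulVec _ (star U) U, hU2, one_mulVec]
    have hDE : diagonal d *ᵥ (diagonal e *ᵥ w') = diagonal f *ᵥ w' := by
      funext i
      rw [mulVec_diagonal, mulVec_diagonal, mulVec_diagonal]
      by_cases hi : d i = 0
      · simp [hf_def, hi, hw's i hi]
      · have h1 : d i * e i = f i := by
          have hff : d i = f i * f i := (Real.mul_self_sqrt (hd i)).symm
          rw [hff, mul_assoc, show f i * e i = 1 by rw [hfe]; simp [hi], mul_one]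
        rw [← mul_assoc, h1]
    have hFw : diagonal f *ᵥ w' ≠ 0 := by
      obtain ⟨i, hi⟩ := Function.ne_iff.mp hw'0
      have hdi : d i ≠ 0 := fun h => hi (hw's i h)
      intro hc
      have hci := congrFun hc i
      rw [mulVec_diagonal] at hci
      simp only [Pi.zero_apply] at hci
      rcases mul_eq_zero.mp hci with h | h
      · exact hsqrt_ne i hdi h
      · exact hi h
    rw [hADE, hDE]
    intro hc
    apply hFw
    have h0 : star U *ᵥ (U *ᵥ (diagonal f *ᵥ w')) = 0 := by rw [hc, mulVec_zero]
    rwa [mulVec_mulVec, hU2, one_mulVec] at h0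
  have hwK' : w ∈ LinearMap.ker (A + t • B).mulVecLin := by
    rw [LinearMap.mem_ker, mulVecLin_apply]; exact hABw
  have hwK : w ∉ LinearMap.ker A.mulVecLin := by
    rw [LinearMap.mem_ker, mulVecLin_apply]; exact hAw
  have hlt : LinearMap.ker A.mulVecLin < LinearMap.ker (A + t • B).mulVecLin :=
    lt_of_le_of_ne hkerle (fun h => hwK (by rw [h]; exact hwK'))
  have hfin := Submodule.finrank_lt_finrank_of_lt hlt
  have e1 := LinearMap.finrank_range_add_finrank_ker A.mulVecLin
  have e2 := LinearMap.finrank_range_add_finrank_ker (A + t • B).mulVecLin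
  have r1 : A.rank = finrank ℝ (LinearMap.range A.mulVecLin) := rfl
  have r2 : (A + t • B).rank = finrank ℝ (LinearMap.range (A + t • B).mulVecLin) := rfl
  rw [← r1] at e1
  rw [← r2] at e2
  omega

noncomputable def emb {n : ℕ} (d : Fin n → ℝ) :
    (Sym2 {i : Fin n // d i ≠ 0} → ℝ) →ₗ[ℝ] Matrix (Fin n) (Fin n) ℝ where
  toFun g := Matrix.of fun i j => if h : d i ≠ 0 ∧ d j ≠ 0 then g s(⟨i, h.1⟩, ⟨j, h.2⟩) else 0
  map_add' := by
    intro g h; ext i j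
    by_cases hc : d i ≠ 0 ∧ d j ≠ 0 <;> simp [hc]
  map_smul' := by
    intro c g; ext i j
    by_cases hc : d i ≠ 0 ∧ d j ≠ 0 <;> simp [hc]

noncomputable def conjMap {n : ℕ} (U : Matrix (Fin n) (Fin n) ℝ) :
    Matrix (Fin n) (Fin n) ℝ →ₗ[ℝ] Matrix (Fin n) (Fin n) ℝ where
  toFun X := U * X * star U
  map_add' X Y := by show U * (X + Y) * star U = U * X * star U + U * Y * star U; rw [Matrix.mul_add, Matrix.add_mul]
  map_smul' c X := by simp only [Matrix.mul_smul, Matrix.smul_mul, RingHom.id_apply]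


lemma conj_cancel {n : ℕ} {U : Matrix (Fin n) (Fin n) ℝ} (hU2 : star U * U = 1)
    (X : Matrix (Fin n) (Fin n) ℝ) : star U * (U * X * star U) * U = X := by
  simp only [← Matrix.mul_assoc]
  rw [hU2, Matrix.one_mul, Matrix.mul_assoc, hU2, Matrix.mul_one]

lemma finrank_W {n : ℕ} {A : Matrix (Fin n) (Fin n) ℝ} (hA : A.PosSemidef)
    (W : Submodule ℝ (Matrix (Fin n) (Fin n) ℝ))
    (hW : ∀ B : Matrix (Fin n) (Fin n) ℝ, Bᵀ = B → (∀ v, A *ᵥ v = 0 → B *ᵥ v = 0) → B ∈ W) :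
    A.rank * (A.rank + 1) / 2 ≤ finrank ℝ W := by
  classical
  have hAH : A.IsHermitian := hA.isHermitian
  set d : Fin n → ℝ := hAH.eigenvalues with hd_def
  set U : Matrix (Fin n) (Fin n) ℝ := (hAH.eigenvectorUnitary : Matrix (Fin n) (Fin n) ℝ) with hU_def
  have hU1 : U * star U = 1 := Matrix.mem_unitaryGroup_iff.mp hAH.eigenvectorUnitary.2
  have hU2 : star U * U = 1 := Matrix.mem_unitaryGroup_iff'.mp hAH.eigenvectorUnitary.2
  have hspec : A = U * diagonal d * star U := by
    simpa [RCLike.ofReal_real_eq_id] using hAH.spectral_theorem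
  set σ := {i : Fin n // d i ≠ 0} with hσ_def
  have hcard : Fintype.card σ = A.rank := (hAH.rank_eq_card_non_zero_eigs).symm
  let em := emb d
  let ψ : (Sym2 σ → ℝ) →ₗ[ℝ] Matrix (Fin n) (Fin n) ℝ := (conjMap U).comp (emb d)
  have hψ : ∀ g, ψ g = U * em g * star U := fun g => rfl
  have hem : ∀ g (i j : Fin n), em g i j = if h : d i ≠ 0 ∧ d j ≠ 0 then g s(⟨i, h.1⟩, ⟨j, h.2⟩) else 0 :=
    fun g i j => rfl
  have hinj : Function.Injective ψ := by
    intro g g' hgg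
    have hem_eq : em g = em g' := by
      have h1 : star U * (U * em g * star U) * U = star U * (U * em g' * star U) * U := by
        rw [← hψ, ← hψ, hgg]
      calc em g = star U * (U * em g * star U) * U := (conj_cancel hU2 _).symm
        _ = star U * (U * em g' * star U) * U := h1
        _ = em g' := conj_cancel hU2 _
    funext z
    induction z using Sym2.ind with
    | _ i j =>
      have := congrFun (congrFun hem_eq i.1) j.1
      rw [hem, hem] at this
      have hc : d i.1 ≠ 0 ∧ d j.1 ≠ 0 := ⟨i.2, j.2⟩
      rw [dif_pos hc, dif_pos hc] at this
      simpa using this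
  have hrange : LinearMap.range ψ ≤ W := by
    rintro - ⟨g, rfl⟩
    rw [hψ]
    apply hW
    · -- symmetry
      have hUt : star U = Uᵀ := by
        rw [star_eq_conjTranspose, conjTranspose_eq_transpose_of_trivial]
      show (U * em g * star U)ᵀ = U * em g * star U
      have hemsym : (em g)ᵀ = em g := by
        ext i j
        show em g j i = em g i j
        rw [hem, hem]
        by_cases hc : d i ≠ 0 ∧ d j ≠ 0
        · rw [dif_pos hc, dif_pos ⟨hc.2, hc.1⟩, Sym2.eq_swap]
        · rw [dif_neg hc, dif_neg (fun h => hc ⟨h.2, h.1⟩)]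
      rw [hUt, Matrix.transpose_mul, Matrix.transpose_mul, Matrix.transpose_transpose,
        hemsym, Matrix.mul_assoc]
    · -- kernel
      intro v hv
      have hDv : diagonal d *ᵥ (star U *ᵥ v) = 0 := by
        have h1 : U *ᵥ (diagonal d *ᵥ (star U *ᵥ v)) = 0 := by
          rw [mulVec_mulVec, mulVec_mulVec, ← hspec]
          exact hv
        have h2 : star U *ᵥ (U *ᵥ (diagonal d *ᵥ (star U *ᵥ v))) = 0 := by
          rw [h1, mulVec_zero]
        rwa [mulVec_mulVec (diagonal d *ᵥ (star U *ᵥ v)) (star U) U, hU2, one_mulVec] at h2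
      have hzero : ∀ i, d i ≠ 0 → (star U *ᵥ v) i = 0 := by
        intro i hi
        have := congrFun hDv i
        rw [mulVec_diagonal] at this
        simpa using (mul_eq_zero.mp this).resolve_left hi
      have hXv : em g *ᵥ (star U *ᵥ v) = 0 := by
        funext i
        show ∑ j, em g i j * (star U *ᵥ v) j = 0
        apply Finset.sum_eq_zero
        intro j _
        by_cases hj : d j ≠ 0
        · rw [hzero j hj, mul_zero]
        · rw [hem, dif_neg (fun h => hj h.2), zero_mul]
      show (U * em g * star U) *ᵥ v = 0
      rw [← mulVec_mulVec, ← mulVec_mulVec, hXv, mulVec_zero]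
  have hfr : finrank ℝ (Sym2 σ → ℝ) = A.rank * (A.rank + 1) / 2 := by
    rw [finrank_fintype_fun_eq_card, Sym2.card, hcard, Nat.choose_two_right,
      Nat.add_sub_cancel, Nat.mul_comm]
  calc A.rank * (A.rank + 1) / 2 = finrank ℝ (Sym2 σ → ℝ) := hfr.symm
    _ = finrank ℝ (LinearMap.range ψ) := (LinearEquiv.ofInjective ψ hinj).finrank_eq
    _ ≤ finrank ℝ W := Submodule.finrank_mono hrange


theorem stmt_6 (n r : ℕ) (L : AffineSubspace ℝ (Matrix (Fin n) (Fin n) ℝ))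
    (hsymm : ∀ A ∈ L, A.IsSymm)
    (hne : ∃ A ∈ L, A.PosSemidef)
    (hcodim : n * (n + 1) / 2 < (r + 1) * (r + 2) / 2 + Module.finrank ℝ L.direction) :
    ∃ A ∈ L, A.PosSemidef ∧ A.rank ≤ r := by
  classical
  obtain ⟨A₀, hA₀L, hA₀psd⟩ := hne
  suffices h : ∀ k, ∀ A, A ∈ L → A.PosSemidef → A.rank ≤ k →
      ∃ A' ∈ L, A'.PosSemidef ∧ A'.rank ≤ r by
    exact h A₀.rank A₀ hA₀L hA₀psd le_rfl
  intro k
  induction k with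
  | zero =>
    intro A hAL hpsd hrk
    exact ⟨A, hAL, hpsd, by omega⟩
  | succ k ih =>
    intro A hAL hpsd hrk
    by_cases hr : A.rank ≤ r
    · exact ⟨A, hAL, hpsd, hr⟩
    · push_neg at hr
      set W : Submodule ℝ (Matrix (Fin n) (Fin n) ℝ) :=
        { carrier := {B | Bᵀ = B ∧ ∀ v, A *ᵥ v = 0 → B *ᵥ v = 0}
          add_mem' := by
            rintro a b ⟨ha1, ha2⟩ ⟨hb1, hb2⟩
            refine ⟨by rw [Matrix.transpose_add, ha1, hb1], fun v hv => ?_⟩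
            rw [Matrix.add_mulVec, ha2 v hv, hb2 v hv, add_zero]
          zero_mem' := by
            refine ⟨Matrix.transpose_zero, fun v hv => ?_⟩
            rw [Matrix.zero_mulVec]
          smul_mem' := by
            rintro c B ⟨h1, h2⟩
            refine ⟨by rw [Matrix.transpose_smul, h1], fun v hv => ?_⟩
            rw [Matrix.smul_mulVec, h2 v hv, smul_zero] } with hW_def
      have hWsub : W ≤ symSub (Fin n) := fun B hB => hB.1
      have hdir : L.direction ≤ symSub (Fin n) := by
        intro v hv
        rw [AffineSubspace.mem_direction_iff_eq_vsub ⟨A, hAL⟩] at hv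
        obtain ⟨p, hp, q, hq, rfl⟩ := hv
        show (p - q)ᵀ = p - q
        rw [Matrix.transpose_sub, hsymm p hp, hsymm q hq]
      have hWfin : A.rank * (A.rank + 1) / 2 ≤ Module.finrank ℝ W :=
        finrank_W hpsd W (fun B h1 h2 => ⟨h1, h2⟩)
      have hsup : Module.finrank ℝ ↥(W ⊔ L.direction) ≤ n * (n + 1) / 2 := by
        have h := Submodule.finrank_mono (sup_le hWsub hdir)
        rwa [finrank_symSub, Fintype.card_fin] at h
      have heq := Submodule.finrank_sup_add_finrank_inf_eq W L.direction
      have hmono : (r + 1) * (r + 2) / 2 ≤ A.rank * (A.rank + 1) / 2 := by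
        apply Nat.div_le_div_right
        apply Nat.mul_le_mul <;> omega
      have hpos : 0 < Module.finrank ℝ ↥(W ⊓ L.direction) := by
        rcases Nat.eq_zero_or_pos (Module.finrank ℝ ↥(W ⊓ L.direction)) with h0 | h
        · exfalso
          rw [h0, Nat.add_zero] at heq
          have c1 : (r + 1) * (r + 2) / 2 + Module.finrank ℝ L.direction
              ≤ Module.finrank ℝ W + Module.finrank ℝ L.direction :=
            Nat.add_le_add_right (le_trans hmono hWfin) _
          rw [← heq] at c1
          exact absurd (lt_of_lt_of_le hcodim (le_trans c1 hsup)) (lt_irrefl _)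
        · exact h
      have hne_bot : W ⊓ L.direction ≠ ⊥ := by
        intro hbot
        rw [hbot] at hpos
        simp at hpos
      obtain ⟨B, hBmem, hB0⟩ := Submodule.exists_mem_ne_zero_of_ne_bot hne_bot
      obtain ⟨hBW, hBdir⟩ := hBmem
      obtain ⟨hBsym, hBker⟩ := hBW
      obtain ⟨t, hpsd', hlt⟩ := reduce hpsd hBsym hB0 hBker
      have hmem' : A + t • B ∈ L := by
        have hm := AffineSubspace.vadd_mem_of_mem_direction
          (Submodule.smul_mem L.direction t hBdir) hAL
        simpa [add_comm] using hm
      exact ih (A + t • B) hmem' hpsd' (by omega)
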